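/- Let m ≥ 1, let w : Fin m → Fin m → ℝ be symmetric with w s s̄ ≥ 0 for s ≠ s̄, suppose the graph on Fin m with an edge between s ≠ s̄ whenever w s s̄ > 0 is connected, and let L be the weighted graph Laplacian of w. Let α > 0 satisfy α · (∑_{s̄ ≠ s} w s s̄) < 1 for every s ∈ Fin m, and set M = 1 − α • L. Then for every x : Fin m → ℝ, the iterates M^k.mulVec x converge, as k → ∞, to the consensus vector whose every component equals the average (1/m) · ∑_s x s. -/

import Mathlib

open Finset Filter

lemma aux_walk_const {V : Type*} {r : V → V → Prop} (h : (SimpleGraph.fromRel r).Connected)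
    (v : V → ℝ) (hv : ∀ a b : V, a ≠ b → (r a b ∨ r b a) → v a = v b) :
    ∀ a b : V, v a = v b := by
  intro a b
  obtain ⟨p⟩ := h.preconnected a b
  induction p with
  | nil => rfl
  | cons h' p ih =>
    rw [SimpleGraph.fromRel_adj] at h'
    exact (hv _ _ h'.1 h'.2).trans ih

/-- For a connected weighted graph with `α · (∑_{t ≠ s} w s t) < 1` for every
`s`, the iterates `M^k x` of `M = 1 − α • L` converge to the consensus vector
whose components all equal the average of the components of `x`. -/
theorem perturbed_identity_powers_reach_consensus
    (m : ℕ) (hm : 1 ≤ m)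
    (w : Fin m → Fin m → ℝ)
    (hw_symm : ∀ s t, w s t = w t s)
    (hw_nonneg : ∀ s t, s ≠ t → 0 ≤ w s t)
    (hw_conn : (SimpleGraph.fromRel (fun s t => 0 < w s t)).Connected)
    (L : Matrix (Fin m) (Fin m) ℝ)
    (hL_diag : ∀ s, L s s = ∑ t ∈ ({s}ᶜ : Finset (Fin m)), w s t)
    (hL_off : ∀ s t, s ≠ t → L s t = -(w s t))
    (α : ℝ) (hα : 0 < α)
    (hαw : ∀ s, α * ∑ t ∈ ({s}ᶜ : Finset (Fin m)), w s t < 1) :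
    ∀ x : Fin m → ℝ,
      Tendsto
        (fun k : ℕ => (((1 : Matrix (Fin m) (Fin m) ℝ) - α • L) ^ k).mulVec x)
        atTop
        (nhds (fun _ => (1 / (m : ℝ)) * ∑ s, x s)) := by
  intro x
  classical
  set M : Matrix (Fin m) (Fin m) ℝ := 1 - α • L with hMdef
  set W : Fin m → Fin m → ℝ := fun s t => if s = t then 0 else w s t with hWdef
  set D : Fin m → ℝ := fun s => ∑ t ∈ ({s}ᶜ : Finset (Fin m)), w s t with hDdef
  have hW_nonneg : ∀ s t, 0 ≤ W s t := by
    intro s t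
    by_cases h : s = t <;> simp [hWdef, h, hw_nonneg s t]
  have hW_symm : ∀ s t, W s t = W t s := by
    intro s t
    by_cases h : s = t
    · simp [hWdef, h]
    · simp [hWdef, h, Ne.symm h, hw_symm s t]
  have hαD : ∀ s, α * D s < 1 := hαw
  have hD_eq : ∀ s, D s = ∑ t, W s t := by
    intro s
    rw [← Finset.sum_compl_add_sum {s} (fun t => W s t), Finset.sum_singleton]
    have : W s s = 0 := by simp [hWdef]
    rw [this, add_zero, hDdef]
    refine Finset.sum_congr rfl fun t ht => ?_
    rw [Finset.mem_compl, Finset.mem_singleton] at ht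
    simp [hWdef, (Ne.symm ht : s ≠ t)]
  -- L applied to vectors
  have hLmv : ∀ (v : Fin m → ℝ) (s : Fin m),
      L.mulVec v s = D s * v s - ∑ t, W s t * v t := by
    intro v s
    have h1 : L.mulVec v s = ∑ t, L s t * v t := rfl
    rw [h1, ← Finset.sum_compl_add_sum {s} (fun t => L s t * v t), Finset.sum_singleton,
      ← Finset.sum_compl_add_sum {s} (fun t => W s t * v t), Finset.sum_singleton]
    have hWss : W s s = 0 := by simp [hWdef]
    have h2 : ∀ t ∈ ({s}ᶜ : Finset (Fin m)), L s t * v t = -(W s t * v t) := by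
      intro t ht
      rw [Finset.mem_compl, Finset.mem_singleton] at ht
      rw [hL_off s t (Ne.symm ht)]
      simp [hWdef, (Ne.symm ht : s ≠ t)]
    rw [Finset.sum_congr rfl h2, hL_diag s, hWss]
    have : (∑ t ∈ ({s}ᶜ : Finset (Fin m)), w s t) = D s := rfl
    rw [this]
    rw [Finset.sum_neg_distrib]
    ring
  have hMmv : ∀ v : Fin m → ℝ, M.mulVec v = v - α • L.mulVec v := by
    intro v
    rw [hMdef, Matrix.sub_mulVec, Matrix.one_mulVec, Matrix.smul_mulVec]
  -- quadratic form identity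
  have hswap : ∀ v : Fin m → ℝ,
      (∑ s, ∑ t, W s t * (v t * v t)) = ∑ s, ∑ t, W s t * (v s * v s) := by
    intro v
    rw [Finset.sum_comm]
    refine Finset.sum_congr rfl fun t _ => Finset.sum_congr rfl fun s _ => by
      rw [hW_symm]
  have key : ∀ v : Fin m → ℝ,
      2 * (∑ s, v s * L.mulVec v s) = ∑ s, ∑ t, W s t * (v s - v t) ^ 2 := by
    intro v
    have hS : (∑ s, v s * L.mulVec v s)
        = (∑ s, ∑ t, W s t * (v s * v s)) - ∑ s, ∑ t, W s t * (v s * v t) := by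
      rw [← Finset.sum_sub_distrib]
      refine Finset.sum_congr rfl fun s _ => ?_
      rw [hLmv, hD_eq]
      rw [mul_sub, Finset.sum_mul, Finset.mul_sum, Finset.mul_sum, ← Finset.sum_sub_distrib, ← Finset.sum_sub_distrib]
      apply Finset.sum_congr rfl
      intro t _
      ring
    have hQ : (∑ s, ∑ t, W s t * (v s - v t) ^ 2)
        = (∑ s, ∑ t, W s t * (v s * v s)) - 2 * (∑ s, ∑ t, W s t * (v s * v t))
          + ∑ s, ∑ t, W s t * (v t * v t) := by
      simp only [Finset.mul_sum, ← Finset.sum_add_distrib, ← Finset.sum_sub_distrib]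
      refine Finset.sum_congr rfl fun s _ => Finset.sum_congr rfl fun t _ => ?_
      ring
    rw [hQ, hswap v, hS]
    ring
  have hQ_nonneg : ∀ v : Fin m → ℝ, 0 ≤ ∑ s, ∑ t, W s t * (v s - v t) ^ 2 := by
    intro v
    refine Finset.sum_nonneg fun s _ => Finset.sum_nonneg fun t _ => ?_
    exact mul_nonneg (hW_nonneg s t) (sq_nonneg _)
  have hQ_le : ∀ v : Fin m → ℝ,
      (∑ s, ∑ t, W s t * (v s - v t) ^ 2) ≤ 4 * ∑ s, D s * (v s * v s) := by
    intro v
    have h1 : (∑ s, ∑ t, W s t * (v s - v t) ^ 2)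
        ≤ ∑ s, ∑ t, (2 * (W s t * (v s * v s)) + 2 * (W s t * (v t * v t))) := by
      refine Finset.sum_le_sum fun s _ => Finset.sum_le_sum fun t _ => ?_
      nlinarith [hW_nonneg s t, sq_nonneg (v s + v t)]
    refine h1.trans_eq ?_
    have h2 : (∑ s, ∑ t, (2 * (W s t * (v s * v s)) + 2 * (W s t * (v t * v t))))
        = 2 * (∑ s, ∑ t, W s t * (v s * v s)) + 2 * (∑ s, ∑ t, W s t * (v t * v t)) := by
      simp only [Finset.mul_sum, ← Finset.sum_add_distrib]
    rw [h2, hswap v]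
    have h3 : ∀ s : Fin m, D s * (v s * v s) = ∑ t, W s t * (v s * v s) := by
      intro s
      rw [hD_eq, Finset.sum_mul]
    simp only [h3, Finset.mul_sum]
    rw [← Finset.sum_add_distrib]
    refine Finset.sum_congr rfl fun s _ => ?_
    rw [← Finset.sum_add_distrib]
    refine Finset.sum_congr rfl fun t _ => ?_
    ring
  -- symmetry of M
  have hL_symm : ∀ s t, L s t = L t s := by
    intro s t
    by_cases h : s = t
    · rw [h]
    · rw [hL_off s t h, hL_off t s (Ne.symm h), hw_symm]
  have hM_symm : ∀ s t, M s t = M t s := by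
    intro s t
    by_cases h : s = t
    · rw [h]
    · rw [hMdef]
      simp [Matrix.sub_apply, Matrix.one_apply, h, Ne.symm h, hL_symm s t]
  have hMherm : M.IsHermitian := by
    ext s t
    simp only [Matrix.conjTranspose_apply, star_trivial]
    exact hM_symm t s
  have hT : (Matrix.toEuclideanLin M).IsSymmetric :=
    Matrix.isHermitian_iff_isSymmetric.mp hMherm
  set b := hT.eigenvectorBasis finrank_euclideanSpace_fin with hb
  set μ := hT.eigenvalues finrank_euclideanSpace_fin with hμ
  have heig : ∀ i, M.mulVec (b i) = μ i • (b i : Fin m → ℝ) :=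
    fun i => by
      have := congrArg WithLp.ofLp (hT.apply_eigenvectorBasis finrank_euclideanSpace_fin i)
      exact this
  have hbne : ∀ i, ∃ s, b i s ≠ 0 := by
    intro i
    by_contra h
    push_neg at h
    exact b.toBasis.ne_zero i (by rw [b.coe_toBasis]; exact WithLp.ofLp_injective 2 (funext h))
  -- eigenvalue bounds
  have hmu_bound : ∀ i, -1 < μ i ∧ μ i ≤ 1 := by
    intro i
    set v : Fin m → ℝ := (b i : Fin m → ℝ) with hv
    have hE_nonneg : ∀ s, (0:ℝ) ≤ v s * v s := fun s => mul_self_nonneg _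
    have hE_pos : 0 < ∑ s, v s * v s := by
      obtain ⟨s0, hs0⟩ := hbne i
      refine Finset.sum_pos' (fun s _ => hE_nonneg s) ⟨s0, Finset.mem_univ s0, ?_⟩
      exact mul_self_pos.mpr hs0
    have hpoint : v - α • L.mulVec v = μ i • v := (hMmv v).symm.trans (heig i)
    have hsumrel : (∑ s, v s * v s) - α * (∑ s, v s * L.mulVec v s)
        = μ i * ∑ s, v s * v s := by
      rw [Finset.mul_sum, Finset.mul_sum, ← Finset.sum_sub_distrib]
      refine Finset.sum_congr rfl fun s _ => ?_
      have h1 : v s - α * L.mulVec v s = μ i * v s := by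
        have := congrFun hpoint s
        simpa using this
      linear_combination v s * h1
    have hS_eq : 2 * (∑ s, v s * L.mulVec v s) = ∑ s, ∑ t, W s t * (v s - v t) ^ 2 :=
      key v
    have hS_nonneg : 0 ≤ ∑ s, v s * L.mulVec v s := by nlinarith [hQ_nonneg v]
    constructor
    · -- lower bound
      have hP_lt : (∑ s, α * (D s * (v s * v s))) < ∑ s, v s * v s := by
        obtain ⟨s0, hs0⟩ := hbne i
        refine Finset.sum_lt_sum (fun s _ => ?_) ⟨s0, Finset.mem_univ s0, ?_⟩
        · nlinarith [hαD s, hE_nonneg s]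
        · nlinarith [hαD s0, mul_self_pos.mpr hs0]
      have hαQ : α * (∑ s, ∑ t, W s t * (v s - v t) ^ 2)
          ≤ α * (4 * ∑ s, D s * (v s * v s)) :=
        mul_le_mul_of_nonneg_left (hQ_le v) hα.le
      have hP_eq : (∑ s, α * (D s * (v s * v s))) = α * ∑ s, D s * (v s * v s) := by
        rw [Finset.mul_sum]
      have hfinal : (1 + μ i) * (∑ s, v s * v s) > 0 := by nlinarith
      rcases mul_pos_iff.mp hfinal with ⟨h1, _⟩ | ⟨_, h2⟩
      · linarith
      · linarith
    · -- upper bound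
      have h1 : (1 - μ i) * (∑ s, v s * v s) ≥ 0 := by nlinarith [hα.le]
      nlinarith [hE_pos, h1]
  -- coefficients and iterates
  set c : Fin m → ℝ := fun i => b.repr (WithLp.toLp 2 x) i with hc
  have hlin : ∀ (a : Fin m → ℝ) (u : Fin m → Fin m → ℝ),
      M.mulVec (∑ i, a i • u i) = ∑ i, a i • M.mulVec (u i) := by
    intro a u
    rw [← Matrix.mulVecLin_apply, map_sum]
    simp [Matrix.mulVecLin_apply]
  have hiter : ∀ k : ℕ, (M ^ k).mulVec x = ∑ i, (μ i ^ k * c i) • (b i : Fin m → ℝ) := by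
    intro k
    induction k with
    | zero =>
      simp only [pow_zero, Matrix.one_mulVec, one_mul]
      have := congrArg WithLp.ofLp (b.sum_repr (WithLp.toLp 2 x)).symm
      simpa [hc] using this
    | succ k ih =>
      rw [pow_succ', ← Matrix.mulVec_mulVec, ih, hlin]
      refine Finset.sum_congr rfl fun i _ => ?_
      rw [heig i, smul_smul]
      congr 1
      ring
  set d : Fin m → ℝ := fun i => if μ i = 1 then c i else 0 with hd
  set l : Fin m → ℝ := ∑ i, d i • (b i : Fin m → ℝ) with hl
  have hmain : Tendsto (fun k : ℕ => (M ^ k).mulVec x) atTop (nhds l) := by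
    simp only [hiter, hl]
    apply tendsto_finset_sum
    intro i _
    by_cases h1 : μ i = 1
    · simp only [hd, h1, if_pos, one_pow, one_mul]
      exact tendsto_const_nhds
    · have habs : |μ i| < 1 :=
        abs_lt.mpr ⟨(hmu_bound i).1, lt_of_le_of_ne (hmu_bound i).2 h1⟩
      have h2 := (tendsto_pow_atTop_nhds_zero_of_abs_lt_one habs).mul_const (c i)
      have h3 := h2.smul_const (b i : Fin m → ℝ)
      simpa [hd, h1] using h3
  -- identify the limit
  have hMl : M.mulVec l = l := by
    rw [hl, hlin]
    refine Finset.sum_congr rfl fun i _ => ?_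
    rw [heig i, smul_smul]
    by_cases h1 : μ i = 1 <;> simp [hd, h1]
  have hLl : L.mulVec l = 0 := by
    have h1 := hMl
    rw [hMmv] at h1
    have h2 : α • L.mulVec l = 0 := sub_eq_self.mp h1
    rcases smul_eq_zero.mp h2 with h | h
    · exact absurd h (ne_of_gt hα)
    · exact h
  have hQl : ∑ s, ∑ t, W s t * (l s - l t) ^ 2 = 0 := by
    have hk := key l
    rw [hLl] at hk
    simpa using hk.symm
  have hterm : ∀ s t, W s t * (l s - l t) ^ 2 = 0 := by
    intro s t
    have houter := (Finset.sum_eq_zero_iff_of_nonneg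
      (fun s _ => Finset.sum_nonneg fun t _ =>
        mul_nonneg (hW_nonneg s t) (sq_nonneg _))).mp hQl s (Finset.mem_univ s)
    exact (Finset.sum_eq_zero_iff_of_nonneg fun t _ =>
      mul_nonneg (hW_nonneg s t) (sq_nonneg _)).mp houter t (Finset.mem_univ t)
  have hedge : ∀ a b' : Fin m, a ≠ b' → (0 < w a b' ∨ 0 < w b' a) → l a = l b' := by
    intro a b' hne hr
    have hwpos : 0 < w a b' := by
      rcases hr with h | h
      · exact h
      · rw [hw_symm a b']; exact h
    have hWab : W a b' = w a b' := by simp [hWdef, hne]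
    have h1 := hterm a b'
    rw [hWab] at h1
    have h2 : (l a - l b') ^ 2 = 0 := by
      rcases mul_eq_zero.mp h1 with h | h
      · exact absurd h (ne_of_gt hwpos)
      · exact h
    have h3 : l a - l b' = 0 := by
      exact pow_eq_zero_iff (n := 2) (by norm_num) |>.mp h2
    linarith
  have hconst : ∀ a b' : Fin m, l a = l b' := aux_walk_const hw_conn l hedge
  -- sum preservation
  have hMrowsum : ∀ s, ∑ t, M s t = 1 := by
    intro s
    have hLsum : ∑ t, L s t = 0 := by
      rw [← Finset.sum_compl_add_sum {s} (fun t => L s t), Finset.sum_singleton]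
      have h2 : ∀ t ∈ ({s}ᶜ : Finset (Fin m)), L s t = -(w s t) := by
        intro t ht
        rw [Finset.mem_compl, Finset.mem_singleton] at ht
        exact hL_off s t (Ne.symm ht)
      rw [Finset.sum_congr rfl h2, hL_diag s, Finset.sum_neg_distrib]
      ring
    have : ∀ t, M s t = (1 : Matrix (Fin m) (Fin m) ℝ) s t - α * L s t := by
      intro t; rw [hMdef]; simp [Matrix.sub_apply]
    simp only [this]
    rw [Finset.sum_sub_distrib, ← Finset.mul_sum, hLsum]
    simp [Matrix.one_apply]
  have hsum_step : ∀ v : Fin m → ℝ, ∑ s, M.mulVec v s = ∑ s, v s := by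
    intro v
    calc ∑ s, M.mulVec v s = ∑ s, ∑ t, M s t * v t := rfl
      _ = ∑ t, ∑ s, M s t * v t := Finset.sum_comm
      _ = ∑ t, v t := by
          refine Finset.sum_congr rfl fun t _ => ?_
          rw [← Finset.sum_mul]
          have h1 : ∑ s, M s t = 1 := by
            rw [Finset.sum_congr rfl fun s _ => hM_symm s t]
            exact hMrowsum t
          rw [h1, one_mul]
  have hsum_pres : ∀ k : ℕ, ∑ s, ((M ^ k).mulVec x) s = ∑ s, x s := by
    intro k
    induction k with
    | zero => simp [Matrix.one_mulVec]
    | succ k ih =>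
      rw [pow_succ', ← Matrix.mulVec_mulVec, hsum_step, ih]
  have hsum_l : ∑ s, l s = ∑ s, x s := by
    have h1 : Tendsto (fun k : ℕ => ∑ s, ((M ^ k).mulVec x) s) atTop (nhds (∑ s, l s)) :=
      tendsto_finset_sum _ fun s _ => ((continuous_apply s).tendsto l).comp hmain
    have h2 : Tendsto (fun k : ℕ => ∑ s, ((M ^ k).mulVec x) s) atTop (nhds (∑ s, x s)) := by
      simp only [hsum_pres]
      exact tendsto_const_nhds
    exact tendsto_nhds_unique h1 h2
  have hm0 : (0:ℝ) < (m:ℝ) := by exact_mod_cast hm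
  have hll : l = fun _ : Fin m => (1 / (m : ℝ)) * ∑ s, x s := by
    funext s
    have hs0 : ∀ s' : Fin m, l s' = l s := fun s' => hconst s' s
    have h4 : ∑ s' : Fin m, l s' = (m : ℝ) * l s := by
      rw [Finset.sum_congr rfl fun s' _ => hs0 s']
      simp [Finset.sum_const, Finset.card_univ, nsmul_eq_mul]
    have h5 : (m : ℝ) * l s = ∑ s, x s := by rw [← h4, hsum_l]
    field_simp
    linarith
  rw [← hll]
  exact hmain
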